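/- Let F be a field of characteristic zero and c ∈ F nonzero. The equation a' = 1/(c·x) has no solution a in F(x), where ' denotes d/dx. -/

import Mathlib

open Polynomial

/-- For `c ∈ F` nonzero, the equation `a' = 1/(c·x)` has no solution in `F(x)`. -/
theorem no_rational_antiderivative_of_inv_cx
    (F : Type*) [Field F] [CharZero F]
    (d : Derivation F (RatFunc F) (RatFunc F)) (hd : d RatFunc.X = 1)
    (c : F) (hc : c ≠ 0) :
    ¬ ∃ a : RatFunc F, d a = 1 / (RatFunc.C c * RatFunc.X) := by
  rintro ⟨a, ha⟩
  set φ := algebraMap F[X] (RatFunc F) with hφ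
  -- the derivation agrees with the formal derivative on polynomials
  have key : ∀ p : F[X], d (φ p) = φ (derivative p) := by
    have h1 : d.compAlgebraMap F[X] = Polynomial.mkDerivation F (1 : RatFunc F) := by
      apply Polynomial.derivation_ext
      simp [hd, RatFunc.algebraMap_X]
    intro p
    have := congrArg (fun D => D p) h1
    simpa [Polynomial.mkDerivation_apply, Algebra.smul_def] using this
  set p := a.num with hp
  set q := a.denom with hqdef
  have hq0 : q ≠ 0 := a.denom_ne_zero
  have hφq0 : φ q ≠ 0 := RatFunc.algebraMap_ne_zero hq0
  have hX0 : (RatFunc.X : RatFunc F) ≠ 0 := RatFunc.X_ne_zero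
  have hC0 : (RatFunc.C c : RatFunc F) ≠ 0 := by
    simpa [RatFunc.algebraMap_C] using (RatFunc.algebraMap_ne_zero (Polynomial.C_ne_zero.mpr hc))
  have hPQ : a * φ q = φ p := by
    rw [← RatFunc.num_div_denom a, div_mul_cancel₀]
    exact hφq0
  have hleib := congrArg d hPQ
  rw [Derivation.leibniz, key, key, ha, smul_eq_mul, smul_eq_mul] at hleib
  -- main equation in RatFunc
  have main : φ q * φ q = RatFunc.C c * RatFunc.X *
      (φ (derivative p) * φ q - φ p * φ (derivative q)) := by
    rw [← RatFunc.num_div_denom a] at hleib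
    field_simp at hleib
    simp only [← hφ, ← hp, ← hqdef] at hleib
    have h3 : φ p * φ (derivative q) * RatFunc.C c * RatFunc.X / φ q * φ q =
        φ p * φ (derivative q) * RatFunc.C c * RatFunc.X := div_mul_cancel₀ _ hφq0
    linear_combination (φ q) * hleib - h3
  -- transfer to a polynomial identity
  have hCX : RatFunc.C c * RatFunc.X = φ (C c * X) := by
    rw [map_mul, RatFunc.algebraMap_C, RatFunc.algebraMap_X]
  have peq : q * q = C c * X * (derivative p * q - p * derivative q) := by
    apply RatFunc.algebraMap_injective F
    push_cast [map_mul, map_sub]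
    rw [← hCX] at *
    simpa [map_mul, map_sub] using main
  -- X divides q
  have hXq_eval : q.eval 0 = 0 := by
    have h := congrArg (Polynomial.eval 0) peq
    simp at h
    tauto
  have hroot : q.IsRoot 0 := hXq_eval
  set m := rootMultiplicity 0 q with hm
  have hm_pos : 0 < m := (Polynomial.rootMultiplicity_pos hq0).mpr hroot
  obtain ⟨k, hk⟩ : ∃ k, m = k + 1 := ⟨m - 1, (Nat.succ_pred_eq_of_pos hm_pos).symm⟩
  set r := q /ₘ (X - C 0) ^ m with hrdef
  have hr0 : r.eval 0 ≠ 0 :=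
    Polynomial.eval_divByMonic_pow_rootMultiplicity_ne_zero 0 hq0
  have hq_eq : r * X ^ (k + 1) = q := by
    have := Polynomial.pow_mul_divByMonic_rootMultiplicity_eq q 0
    rw [C_0, sub_zero] at this
    rw [hrdef, C_0, sub_zero, ← hk, mul_comm]
    exact this
  rw [← hq_eq] at peq
  have hder : derivative (r * X ^ (k + 1)) =
      derivative r * X ^ (k + 1) + r * (C ((k + 1 : ℕ) : F) * X ^ k) := by
    rw [derivative_mul, derivative_X_pow]
    simp
  rw [hder] at peq
  -- cancel X^(k+1)
  have E : X ^ (k + 1) * (r * r * X ^ (k + 1)) = X ^ (k + 1) *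
      (C c * (X * derivative p * r - C ((k + 1 : ℕ) : F) * p * r - X * p * derivative r)) := by
    linear_combination peq
  have E2 := mul_left_cancel₀ (pow_ne_zero (k + 1) (Polynomial.X_ne_zero (R := F))) E
  have hev := congrArg (Polynomial.eval 0) E2
  simp at hev
  -- hev should give p.eval 0 = 0
  have hp0 : p.eval 0 = 0 := by
    have hk0 : ((k : F) + 1) ≠ 0 := by
      have : ((k + 1 : ℕ) : F) ≠ 0 := Nat.cast_ne_zero.mpr (Nat.succ_ne_zero k)
      push_cast at this; exact this
    tauto
  -- contradiction with coprimality
  have hXp : X ∣ p := by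
    rw [Polynomial.X_dvd_iff, Polynomial.coeff_zero_eq_eval_zero]
    exact hp0
  have hXq : X ∣ q := ⟨r * X ^ k, by rw [← hq_eq]; ring⟩
  exact Polynomial.not_isUnit_X ((RatFunc.isCoprime_num_denom a).isUnit_of_dvd' hXp hXq)
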